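/- Let V be a finite-dimensional real normed vector space, let k ≥ 2, and let γ₁, …, γ_k ∈ GL(V) be biproximal with data (L_i⁺, L_i⁻, W_i) for i = 1, …, k. Assume: (a) the span of all the lines L_i⁺, L_i⁻ (1 ≤ i ≤ k) is all of V; (b) the intersection ⋂_{1≤i≤k} W_i is {0}; (c) for all i ≠ j and all signs α, β ∈ {+, −}, the line L_i^α is not contained in L_j^β + W_j. Then the subgroup Γ of GL(V) generated by γ₁, …, γ_k acts strongly irreducibly on V: for every finite-index subgroup Γ₁ of Γ and every linear subspace U of V with U ≠ {0} and U ≠ V, there exists γ ∈ Γ₁ with γ(U) ≠ U. (Lemma 4.5.) -/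

import Mathlib

open Filter

/-- `g ∈ GL(V)` is biproximal with attracting line `Lp`, repelling line `Lm` and
invariant complement `W`. -/
structure IsBiproximal {V : Type*} [NormedAddCommGroup V] [NormedSpace ℝ V]
    (g : V ≃ₗ[ℝ] V) (Lp Lm W : Submodule ℝ V) : Prop where
  finrank_Lp : Module.finrank ℝ Lp = 1
  finrank_Lm : Module.finrank ℝ Lm = 1
  ne : Lp ≠ Lm
  inf_lines : Lp ⊓ Lm = ⊥
  inf_W : (Lp ⊔ Lm) ⊓ W = ⊥
  sup_top : Lp ⊔ Lm ⊔ W = ⊤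
  map_Lp : Lp.map (g : V →ₗ[ℝ] V) = Lp
  map_Lm : Lm.map (g : V →ₗ[ℝ] V) = Lm
  map_W : W.map (g : V →ₗ[ℝ] V) = W
  attract : ∀ w : V, w ∉ Lm ⊔ W →
    Tendsto (fun n : ℕ => Metric.infDist (‖(g ^ n) w‖⁻¹ • (g ^ n) w) (Lp : Set V))
      atTop (nhds 0)
  repel : ∀ w : V, w ∉ Lp ⊔ W →
    Tendsto (fun n : ℕ => Metric.infDist (‖(g⁻¹ ^ n) w‖⁻¹ • (g⁻¹ ^ n) w) (Lm : Set V))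
      atTop (nhds 0)

/-- If `U` is a closed invariant subspace containing a vector attracted to the line `L`,
then `L ≤ U`. -/
private lemma key_line_le {V : Type*} [NormedAddCommGroup V] [NormedSpace ℝ V]
    [FiniteDimensional ℝ V] (g : V ≃ₗ[ℝ] V) (L U : Submodule ℝ V)
    (hL : Module.finrank ℝ L = 1)
    (hU : U.map (g : V →ₗ[ℝ] V) = U) (w : V) (hw : w ∈ U) (hw0 : w ≠ 0)
    (hattr : Tendsto (fun n : ℕ => Metric.infDist (‖(g ^ n) w‖⁻¹ • (g ^ n) w) (L : Set V))
      atTop (nhds 0)) : L ≤ U := by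
  have hstep : ∀ x ∈ U, g x ∈ U := by
    intro x hx
    have : (g : V →ₗ[ℝ] V) x ∈ U.map (g : V →ₗ[ℝ] V) := Submodule.mem_map_of_mem hx
    rwa [hU] at this
  have hmem : ∀ n : ℕ, (g ^ n) w ∈ U := by
    intro n
    induction n with
    | zero => simpa using hw
    | succ n ih =>
      have : (g ^ (n + 1)) w = g ((g ^ n) w) := by
        simp [LinearEquiv.pow_apply, Function.iterate_succ_apply']
      rw [this]
      exact hstep _ ih
  have hne : ∀ n : ℕ, (g ^ n) w ≠ 0 := by
    intro n h
    exact hw0 ((g ^ n).map_eq_zero_iff.1 h)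
  set v : ℕ → V := fun n => ‖(g ^ n) w‖⁻¹ • (g ^ n) w with hv
  have hvU : ∀ n, v n ∈ U := fun n => U.smul_mem _ (hmem n)
  have hvs : ∀ n, v n ∈ Metric.sphere (0 : V) 1 := by
    intro n
    rw [mem_sphere_zero_iff_norm, hv]
    simp [norm_smul, inv_mul_cancel₀ (norm_ne_zero_iff.2 (hne n))]
  obtain ⟨x, hxs, φ, hφ, hlim⟩ := (isCompact_sphere (0 : V) 1).tendsto_subseq hvs
  have hxU : x ∈ U :=
    U.closed_of_finiteDimensional.mem_of_tendsto hlim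
      (Eventually.of_forall fun n => hvU (φ n))
  have hx0 : x ≠ 0 := by
    intro h
    have := mem_sphere_zero_iff_norm.1 hxs
    rw [h] at this
    simp at this
  have h1 : Tendsto (fun n => Metric.infDist (v (φ n)) (L : Set V)) atTop
      (nhds (Metric.infDist x (L : Set V))) :=
    ((Metric.continuous_infDist_pt (L : Set V)).tendsto x).comp hlim
  have h2 : Tendsto (fun n => Metric.infDist (v (φ n)) (L : Set V)) atTop (nhds 0) :=
    hattr.comp hφ.tendsto_atTop
  have hd0 : Metric.infDist x (L : Set V) = 0 := tendsto_nhds_unique h1 h2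
  have hxL : x ∈ L := by
    have := (L.closed_of_finiteDimensional.mem_iff_infDist_zero
      ⟨0, L.zero_mem⟩ (x := x)).2 hd0
    exact this
  have hsp : Submodule.span ℝ {x} = L := by
    apply Submodule.eq_of_le_of_finrank_eq
    · exact (Submodule.span_singleton_le_iff_mem x L).2 hxL
    · rw [finrank_span_singleton hx0, hL]
  rw [← hsp]
  exact (Submodule.span_singleton_le_iff_mem x U).2 hxU

/-- Lemma 4.5: biproximal elements `γ₁, …, γ_k` satisfying conditions (a), (b), (c)
generate a group acting strongly irreducibly on `V`. -/
theorem lemma_4_5 {V : Type*} [NormedAddCommGroup V] [NormedSpace ℝ V]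
    [FiniteDimensional ℝ V]
    (k : ℕ) (hk : 2 ≤ k) (γ : Fin k → (V ≃ₗ[ℝ] V))
    (Lp Lm W : Fin k → Submodule ℝ V)
    (hbi : ∀ i, IsBiproximal (γ i) (Lp i) (Lm i) (W i))
    (hspan : (⨆ i, Lp i ⊔ Lm i) = ⊤)
    (hW : (⨅ i, W i) = ⊥)
    (hpos : ∀ i j, i ≠ j → ∀ α β : Bool,
      ¬ (if α then Lp i else Lm i) ≤ (if β then Lp j else Lm j) ⊔ W j) :
    ∀ Γ₁ : Subgroup (V ≃ₗ[ℝ] V), Γ₁ ≤ Subgroup.closure (Set.range γ) →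
      Γ₁.relIndex (Subgroup.closure (Set.range γ)) ≠ 0 →
      ∀ U : Submodule ℝ V, U ≠ ⊥ → U ≠ ⊤ →
        ∃ g ∈ Γ₁, U.map (g : V →ₗ[ℝ] V) ≠ U := by
  intro Γ₁ hle hrel U hUbot hUtop
  by_contra hcon
  push_neg at hcon
  -- every element of Γ₁ preserves U
  have hinv : ∀ g ∈ Γ₁, U.map (g : V →ₗ[ℝ] V) = U := hcon
  -- for each i some positive power of γ i lies in Γ₁
  have hpow : ∀ i : Fin k, ∃ m : ℕ, 0 < m ∧ (γ i) ^ m ∈ Γ₁ := by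
    intro i
    obtain ⟨n, hn, -, hmem⟩ := Subgroup.exists_pow_mem_of_relIndex_ne_zero hrel
      (Subgroup.subset_closure (Set.mem_range_self i))
    exact ⟨n, hn, hmem.1⟩
  -- attraction: a vector of U outside Lm i ⊔ W i forces Lp i ≤ U
  have hAttr : ∀ i : Fin k, ∀ w : V, w ∈ U → w ∉ Lm i ⊔ W i → Lp i ≤ U := by
    intro i w hwU hw
    obtain ⟨m, hm, hmem⟩ := hpow i
    have hw0 : w ≠ 0 := fun h => hw (h ▸ Submodule.zero_mem _)
    have hmn : Tendsto (fun n : ℕ => m * n) atTop atTop :=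
      tendsto_atTop_mono (fun n => Nat.le_mul_of_pos_left n hm) tendsto_id
    have h2 : Tendsto (fun n : ℕ =>
        Metric.infDist (‖((γ i ^ m) ^ n) w‖⁻¹ • ((γ i ^ m) ^ n) w) ((Lp i : Set V)))
        atTop (nhds 0) := by
      have := ((hbi i).attract w hw).comp hmn
      simpa [Function.comp_def, pow_mul] using this
    exact key_line_le (γ i ^ m) (Lp i) U (hbi i).finrank_Lp (hinv _ hmem) w hwU hw0 h2
  -- repulsion: a vector of U outside Lp i ⊔ W i forces Lm i ≤ U
  have hRepel : ∀ i : Fin k, ∀ w : V, w ∈ U → w ∉ Lp i ⊔ W i → Lm i ≤ U := by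
    intro i w hwU hw
    obtain ⟨m, hm, hmem⟩ := hpow i
    have hw0 : w ≠ 0 := fun h => hw (h ▸ Submodule.zero_mem _)
    have hmn : Tendsto (fun n : ℕ => m * n) atTop atTop :=
      tendsto_atTop_mono (fun n => Nat.le_mul_of_pos_left n hm) tendsto_id
    have h2 : Tendsto (fun n : ℕ =>
        Metric.infDist (‖(((γ i ^ m)⁻¹) ^ n) w‖⁻¹ • (((γ i ^ m)⁻¹) ^ n) w)
          ((Lm i : Set V))) atTop (nhds 0) := by
      have := ((hbi i).repel w hw).comp hmn
      have hpw : ∀ n : ℕ, ((γ i ^ m)⁻¹) ^ n = (γ i)⁻¹ ^ (m * n) := by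
        intro n
        rw [inv_pow, ← pow_mul, ← inv_pow]
      simpa [Function.comp_def, hpw] using this
    exact key_line_le ((γ i ^ m)⁻¹) (Lm i) U (hbi i).finrank_Lm
      (hinv _ (Γ₁.inv_mem hmem)) w hwU hw0 h2
  -- a vector in both Lp i ⊔ W i and Lm i ⊔ W i lies in W i
  have hsep : ∀ i : Fin k, ∀ w : V, w ∈ Lp i ⊔ W i → w ∈ Lm i ⊔ W i → w ∈ W i := by
    intro i w h1 h2
    obtain ⟨p, hp, w1, hw1, hpe⟩ := Submodule.mem_sup.1 h1
    obtain ⟨q, hq, w2, hw2, hqe⟩ := Submodule.mem_sup.1 h2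
    have hd : p - q ∈ (Lp i ⊔ Lm i) ⊓ W i := by
      constructor
      · exact sub_mem (Submodule.mem_sup_left hp) (Submodule.mem_sup_right hq)
      · have heq : p + w1 = q + w2 := by rw [hpe, hqe]
        have : p - q = w2 - w1 := by
          rw [sub_eq_sub_iff_add_eq_add, heq, add_comm]
        rw [this]
        exact sub_mem hw2 hw1
    rw [(hbi i).inf_W, Submodule.mem_bot, sub_eq_zero] at hd
    have hpq : p ∈ Lp i ⊓ Lm i := ⟨hp, hd ▸ hq⟩
    rw [(hbi i).inf_lines, Submodule.mem_bot] at hpq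
    rw [← hpe, hpq, zero_add]
    exact hw1
  -- one-dimensional subspaces of U not inside the bad subspaces force both lines in U
  have hstep : ∀ j : Fin k, ∀ L : Submodule ℝ V, Module.finrank ℝ L = 1 → L ≤ U →
      ¬ L ≤ Lp j ⊔ W j → ¬ L ≤ Lm j ⊔ W j → Lp j ≤ U ∧ Lm j ≤ U := by
    intro j L hfr hLU hc1 hc2
    obtain ⟨v, hvL, hv1⟩ := SetLike.not_le_iff_exists.1 hc1
    have hv0 : v ≠ 0 := fun h => hv1 (h ▸ Submodule.zero_mem _)
    have hspL : Submodule.span ℝ {v} = L := by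
      apply Submodule.eq_of_le_of_finrank_eq
      · exact (Submodule.span_singleton_le_iff_mem v L).2 hvL
      · rw [finrank_span_singleton hv0, hfr]
    have hv2 : v ∉ Lm j ⊔ W j := by
      intro hmem
      exact hc2 (hspL ▸ (Submodule.span_singleton_le_iff_mem v _).2 hmem)
    exact ⟨hAttr j v (hLU hvL) hv2, hRepel j v (hLU hvL) hv1⟩
  -- get a starting index
  obtain ⟨u, huU, hu0⟩ := Submodule.exists_mem_ne_zero_of_ne_bot hUbot
  have hex : ∃ i, u ∉ W i := by
    by_contra hc
    push_neg at hc
    apply hu0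
    have : u ∈ ⨅ i, W i := Submodule.mem_iInf W |>.2 hc
    rwa [hW, Submodule.mem_bot] at this
  obtain ⟨i₀, hi₀⟩ := hex
  -- at i₀ one of the lines is in U
  have hfirst : Lp i₀ ≤ U ∨ Lm i₀ ≤ U := by
    by_cases h1 : u ∈ Lp i₀ ⊔ W i₀
    · by_cases h2 : u ∈ Lm i₀ ⊔ W i₀
      · exact absurd (hsep i₀ u h1 h2) hi₀
      · exact Or.inl (hAttr i₀ u huU h2)
    · exact Or.inr (hRepel i₀ u huU h1)
  -- propagate to all j ≠ i₀
  have hall : ∀ j : Fin k, j ≠ i₀ → Lp j ≤ U ∧ Lm j ≤ U := by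
    intro j hj
    rcases hfirst with hL | hL
    · exact hstep j (Lp i₀) (hbi i₀).finrank_Lp hL
        (by simpa using hpos i₀ j (Ne.symm hj) true true)
        (by simpa using hpos i₀ j (Ne.symm hj) true false)
    · exact hstep j (Lm i₀) (hbi i₀).finrank_Lm hL
        (by simpa using hpos i₀ j (Ne.symm hj) false true)
        (by simpa using hpos i₀ j (Ne.symm hj) false false)
  -- get it also at i₀, using some j ≠ i₀
  have hboth : ∀ j : Fin k, Lp j ≤ U ∧ Lm j ≤ U := by
    intro j
    by_cases hj : j = i₀
    · subst hj
      have h0 : (⟨0, by omega⟩ : Fin k) ≠ (⟨1, by omega⟩ : Fin k) := by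
        simp [Fin.ext_iff]
      obtain ⟨j', hj'⟩ : ∃ j' : Fin k, j' ≠ j := by
        by_cases h : j = ⟨0, by omega⟩
        · exact ⟨⟨1, by omega⟩, by rw [h]; exact h0.symm⟩
        · exact ⟨⟨0, by omega⟩, fun hh => h hh.symm⟩
      have hLj' : Lp j' ≤ U := (hall j' (by
        intro hh
        exact hj' (hh.trans rfl))).1
      exact hstep j (Lp j') (hbi j').finrank_Lp hLj'
        (by simpa using hpos j' j hj' true true)
        (by simpa using hpos j' j hj' true false)
    · exact hall j hj
  apply hUtop
  rw [← top_le_iff, ← hspan]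
  exact iSup_le fun j => sup_le (hboth j).1 (hboth j).2
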